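/- For real a > 0 and real b with |b| < a, ∫₀^∞ (cosh(b x)/sinh(a x)) · x dx = (π²/(4a²)) · 1/cos²(π b/(2a)). -/

import Mathlib

open Real MeasureTheory

lemma aux_sum (c : ℝ) (hc : 0 < c) : Summable (fun n : ℕ => 1 / ((n : ℝ) + c) ^ 2) := by
  rw [← summable_nat_add_iff 1]
  have hs : Summable (fun n : ℕ => 1 / ((n : ℝ) + 1) ^ 2) := by
    have := Real.summable_one_div_nat_pow.mpr (show 1 < 2 by norm_num)
    rw [← summable_nat_add_iff 1] at this
    simpa using this
  refine hs.of_nonneg_of_le (fun n => by positivity) (fun n => ?_)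
  apply one_div_le_one_div_of_le (by positivity)
  have h : ((n:ℝ) + 1) ≤ (↑(n+1):ℝ) + c := by push_cast; linarith
  nlinarith [Nat.cast_nonneg (α := ℝ) n]

lemma sub_int_ne (x : ℝ) (hx0 : 0 < x) (hx1 : x < 1) (n : ℤ) : x - (n:ℝ) ≠ 0 := by
  intro h
  have h' : (n : ℝ) = x := by linarith
  rcases le_or_gt n 0 with h'' | h''
  · have : (n : ℝ) ≤ 0 := by exact_mod_cast h''
    linarith
  · have : (1 : ℝ) ≤ n := by exact_mod_cast h''
    linarith

lemma norm_sq_eq (x : ℝ) (n : ℤ) (hxn : x - (n:ℝ) ≠ 0) :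
    ‖(Complex.exp (2 * π * x * Complex.I) - 1) / (2 * π * ((x:ℂ) - n) * Complex.I)‖ ^ 2
      = (Real.sin (π * x) ^ 2 / π ^ 2) * (1 / (x - n) ^ 2) := by
  rw [norm_div]
  rw [div_pow]
  have hnum : ‖Complex.exp (2 * π * x * Complex.I) - 1‖ ^ 2 = 4 * Real.sin (π * x) ^ 2 := by
    have harg : (2 * (π:ℂ) * x * Complex.I) = ((2 * π * x : ℝ) : ℂ) * Complex.I := by
      push_cast; ring
    rw [harg, Complex.exp_mul_I, ← Complex.ofReal_cos, ← Complex.ofReal_sin,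
      Complex.sq_norm]
    simp only [Complex.normSq_apply, Complex.sub_re, Complex.add_re, Complex.ofReal_re,
      Complex.mul_re, Complex.I_re, Complex.I_im, Complex.ofReal_im, Complex.one_re,
      Complex.sub_im, Complex.add_im, Complex.mul_im, Complex.one_im]
    have h2 : Real.cos (2 * π * x) = 2 * Real.cos (π * x) ^ 2 - 1 := by
      rw [show 2 * π * x = 2 * (π * x) by ring, Real.cos_two_mul]
    nlinarith [Real.sin_sq_add_cos_sq (π * x), Real.sin_sq_add_cos_sq (2 * π * x)]
  have hden : ‖2 * (π:ℂ) * ((x:ℂ) - n) * Complex.I‖ ^ 2 = 4 * π ^ 2 * (x - n) ^ 2 := by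
    have : (2 * (π:ℂ) * ((x:ℂ) - n) * Complex.I) = ((2 * π * (x - n) : ℝ) : ℂ) * Complex.I := by
      push_cast; ring
    rw [this, norm_mul, Complex.norm_I, mul_one, Complex.norm_real, Real.norm_eq_abs, sq_abs]
    ring
  rw [hnum, hden]
  have hπ : (π : ℝ) ≠ 0 := Real.pi_ne_zero
  field_simp

lemma fc_eq (x : ℝ) (hx0 : 0 < x) (hx1 : x < 1) (n : ℤ) :
    fourierCoeff (AddCircle.liftIoc 1 0 (fun t : ℝ => Complex.exp (2 * π * x * t * Complex.I))) n
      = (Complex.exp (2 * π * x * Complex.I) - 1) / (2 * π * ((x:ℂ) - n) * Complex.I) := by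
  have hxn := sub_int_ne x hx0 hx1 n
  have hc : (2 * (π : ℂ) * ((x : ℂ) - n) * Complex.I) ≠ 0 := by
    simp only [ne_eq, mul_eq_zero, Complex.I_ne_zero, or_false]
    push_neg
    refine ⟨⟨two_ne_zero, ?_⟩, ?_⟩
    · exact_mod_cast Real.pi_ne_zero
    · intro h
      apply hxn
      have := congrArg Complex.re h
      simpa using this
  rw [fourierCoeff_liftIoc_eq, fourierCoeffOn_eq_integral]
  have hint : ∫ (t : ℝ) in (0:ℝ)..0 + 1, (fourier (-n)) (t : AddCircle (0+1-0:ℝ)) • Complex.exp (2 * ↑π * ↑x * ↑t * Complex.I)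
      = ∫ (t : ℝ) in (0:ℝ)..0 + 1, Complex.exp ((2 * ↑π * ((x:ℂ) - n) * Complex.I) * t) := by
    refine intervalIntegral.integral_congr fun t ht => ?_
    rw [fourier_coe_apply, smul_eq_mul, ← Complex.exp_add]
    congr 1
    push_cast
    ring
  rw [hint, integral_exp_mul_complex hc]
  have h2 : Complex.exp (2 * ↑π * (↑x - ↑n) * Complex.I * ((0:ℝ) + 1 : ℝ)) = Complex.exp (2 * π * x * Complex.I) := by
    have he : (2 : ℂ) * ↑π * (↑x - ↑n) * Complex.I * ((0:ℝ) + 1 : ℝ) = 2 * π * x * Complex.I + ((-n : ℤ) : ℂ) * (2 * π * Complex.I) := by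
      push_cast; ring
    rw [he, Complex.exp_add, Complex.exp_int_mul_two_pi_mul_I, mul_one]
  rw [h2]
  norm_num

lemma parseval_sum (x : ℝ) (hx0 : 0 < x) (hx1 : x < 1) :
    ∑' n : ℤ, 1 / (x - (n:ℝ)) ^ 2 = π ^ 2 / Real.sin (π * x) ^ 2 := by
  haveI : Fact ((0:ℝ) < 1) := ⟨one_pos⟩
  set g : ℝ → ℂ := fun t => Complex.exp (2 * π * x * t * Complex.I) with hg
  set F : AddCircle (1:ℝ) → ℂ := AddCircle.liftIoc 1 0 g with hFdef
  have hnorm : ∀ z, ‖F z‖ = 1 := by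
    intro z
    rw [hFdef]
    show ‖g _‖ = 1
    rw [hg]
    have : (2 * (π:ℂ) * x * (((AddCircle.equivIoc 1 0 z : ℝ)) : ℂ) * Complex.I)
        = ((2 * π * x * (AddCircle.equivIoc 1 0 z : ℝ) : ℝ) : ℂ) * Complex.I := by push_cast; ring
    show ‖Complex.exp _‖ = 1
    rw [this]
    simp [Complex.norm_exp]
  have hmeasg : Measurable g := by
    apply Continuous.measurable
    continuity
  have hmeas : Measurable F := by
    rw [hFdef]
    exact (hmeasg.comp measurable_subtype_coe).comp (AddCircle.measurableEquivIoc 1 0).measurable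
  have hmem : MemLp F 2 AddCircle.haarAddCircle := by
    refine MemLp.of_bound hmeas.aestronglyMeasurable 1 ?_
    filter_upwards with z using le_of_eq (hnorm z)
  set f := hmem.toLp F with hf
  have hae : ⇑f =ᵐ[AddCircle.haarAddCircle] F := hmem.coeFn_toLp
  have hcoeff : ∀ n : ℤ, fourierCoeff (⇑f) n = fourierCoeff F n := by
    intro n
    have h : ∫ t, (fourier (-n)) t • (⇑f) t ∂AddCircle.haarAddCircle
        = ∫ t, (fourier (-n)) t • F t ∂AddCircle.haarAddCircle := by
      apply integral_congr_ae
      filter_upwards [hae] with z hz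
      rw [hz]
    simp only [fourierCoeff]
    rw [h]
  have key := tsum_sq_fourierCoeff f
  have hRHS : ∫ t : AddCircle (1:ℝ), ‖f t‖ ^ 2 ∂AddCircle.haarAddCircle = 1 := by
    rw [integral_congr_ae (by filter_upwards [hae] with z hz; rw [hz] : (fun t => ‖f t‖ ^ 2) =ᵐ[AddCircle.haarAddCircle] fun t => ‖F t‖ ^ 2)]
    simp only [hnorm, one_pow]
    simp
  rw [hRHS] at key
  have hterm : ∀ n : ℤ, ‖fourierCoeff (⇑f) n‖ ^ 2
      = (Real.sin (π * x) ^ 2 / π ^ 2) * (1 / (x - (n:ℝ)) ^ 2) := by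
    intro n
    rw [hcoeff n, hFdef, hg, fc_eq x hx0 hx1 n, norm_sq_eq x n (sub_int_ne x hx0 hx1 n)]
  simp only [hterm] at key
  rw [tsum_mul_left] at key
  have hsin : Real.sin (π * x) ≠ 0 := by
    have := Real.sin_pos_of_pos_of_lt_pi (x := π * x) (by positivity)
      (by nlinarith [Real.pi_pos])
    linarith
  have hk : Real.sin (π * x) ^ 2 / π ^ 2 ≠ 0 := by positivity
  field_simp at key ⊢
  linarith [key]

lemma integrable_x_exp (c : ℝ) (hc : 0 < c) :
    IntegrableOn (fun x : ℝ => x * Real.exp (-(c * x))) (Set.Ioi 0) := by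
  have := integrableOn_rpow_mul_exp_neg_mul_rpow (p := 1) (s := 1) (b := c)
    (by norm_num) one_pos hc
  simpa [Real.rpow_one, neg_mul] using this

lemma integral_x_exp (c : ℝ) (hc : 0 < c) :
    ∫ x in Set.Ioi (0:ℝ), x * Real.exp (-(c * x)) = 1 / c ^ 2 := by
  have := Real.integral_rpow_mul_exp_neg_mul_Ioi (a := 2) (r := c) (by norm_num) hc
  rw [Real.Gamma_two, mul_one] at this
  rw [show (2 : ℝ) - 1 = 1 by norm_num] at this
  simp only [Real.rpow_one] at this
  rw [this, show ((2:ℝ)) = ((2:ℕ):ℝ) by norm_num, Real.rpow_natCast, div_pow, one_pow]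

set_option maxHeartbeats 1000000 in
theorem stmt_1 (a b : ℝ) (ha : 0 < a) (hb : |b| < a) :
    ∫ x in Set.Ioi (0:ℝ), (Real.cosh (b * x) / Real.sinh (a * x)) * x =
      (π ^ 2 / (4 * a ^ 2)) * (1 / Real.cos (π * b / (2 * a)) ^ 2) := by
  have hb1 : -a < b := neg_lt_of_abs_lt hb
  have hb2 : b < a := lt_of_abs_lt hb
  set c₁ : ℕ → ℝ := fun n => (2 * n + 1) * a - b with hc₁def
  set c₂ : ℕ → ℝ := fun n => (2 * n + 1) * a + b with hc₂def
  have hc₁ : ∀ n, 0 < c₁ n := fun n => by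
    simp only [hc₁def]; nlinarith [Nat.cast_nonneg (α := ℝ) n]
  have hc₂ : ∀ n, 0 < c₂ n := fun n => by
    simp only [hc₂def]; nlinarith [Nat.cast_nonneg (α := ℝ) n]
  set f : ℕ → ℝ → ℝ := fun n x => x * Real.exp (-(c₁ n * x)) + x * Real.exp (-(c₂ n * x)) with hfdef
  have hint : ∀ n, IntegrableOn (f n) (Set.Ioi 0) := fun n =>
    (integrable_x_exp _ (hc₁ n)).add (integrable_x_exp _ (hc₂ n))
  have hival : ∀ n, ∫ x in Set.Ioi (0:ℝ), f n x = 1 / c₁ n ^ 2 + 1 / c₂ n ^ 2 := fun n => by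
    simp only [hfdef]
    rw [integral_add (integrable_x_exp _ (hc₁ n)) (integrable_x_exp _ (hc₂ n)),
      integral_x_exp _ (hc₁ n), integral_x_exp _ (hc₂ n)]
  set x₀ : ℝ := (a + b) / (2 * a) with hx₀def
  have hx0 : 0 < x₀ := by
    rw [hx₀def]
    apply div_pos (by linarith) (by positivity)
  have hx1 : x₀ < 1 := by rw [hx₀def, div_lt_one (by positivity)]; linarith
  have hc₁eq : ∀ n : ℕ, c₁ n = 2 * a * ((n:ℝ) + (1 - x₀)) := fun n => by
    simp only [hc₁def, hx₀def]; field_simp; ring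
  have hc₂eq : ∀ n : ℕ, c₂ n = 2 * a * ((n:ℝ) + x₀) := fun n => by
    simp only [hc₂def, hx₀def]; field_simp; ring
  have hterm₁ : ∀ n : ℕ, 1 / c₁ n ^ 2 = 1 / (4 * a ^ 2) * (1 / ((n:ℝ) + (1 - x₀)) ^ 2) := by
    intro n
    rw [hc₁eq n, div_mul_div_comm, one_mul, mul_pow]
    congr 1
    ring
  have hterm₂ : ∀ n : ℕ, 1 / c₂ n ^ 2 = 1 / (4 * a ^ 2) * (1 / ((n:ℝ) + x₀) ^ 2) := by
    intro n
    rw [hc₂eq n, div_mul_div_comm, one_mul, mul_pow]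
    congr 1
    ring
  have hsum1 : Summable (fun n : ℕ => 1 / c₁ n ^ 2) := by
    refine ((aux_sum (1 - x₀) (by linarith)).mul_left (1 / (4 * a ^ 2))).congr fun n => ?_
    rw [hterm₁ n]
  have hsum2 : Summable (fun n : ℕ => 1 / c₂ n ^ 2) := by
    refine ((aux_sum x₀ hx0).mul_left (1 / (4 * a ^ 2))).congr fun n => ?_
    rw [hterm₂ n]
  have hS : Summable (fun n : ℕ => 1 / c₁ n ^ 2 + 1 / c₂ n ^ 2) := hsum1.add hsum2
  have hnormint : ∀ n, ∫ x in Set.Ioi (0:ℝ), ‖f n x‖ = ∫ x in Set.Ioi (0:ℝ), f n x := by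
    intro n
    refine setIntegral_congr_fun measurableSet_Ioi (fun x hx => ?_)
    have hx0' : (0:ℝ) < x := hx
    rw [Real.norm_eq_abs, abs_of_nonneg]
    simp only [hfdef]
    have := Real.exp_nonneg (-(c₁ n * x))
    have := Real.exp_nonneg (-(c₂ n * x))
    nlinarith
  have hsumnorm : Summable (fun n : ℕ => ∫ x in Set.Ioi (0:ℝ), ‖f n x‖) := by
    refine hS.congr fun n => ?_
    rw [hnormint n, hival n]
  -- pointwise series identity
  have hpt : Set.EqOn (fun x : ℝ => (Real.cosh (b * x) / Real.sinh (a * x)) * x)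
      (fun x : ℝ => ∑' n : ℕ, f n x) (Set.Ioi 0) := by
    intro x hx
    have hxpos : (0:ℝ) < x := hx
    have hr0 : (0:ℝ) ≤ Real.exp (-(2 * a * x)) := (Real.exp_pos _).le
    have hr1 : Real.exp (-(2 * a * x)) < 1 := by
      rw [Real.exp_lt_one_iff]; nlinarith
    have hfx : ∀ n : ℕ, f n x
        = (x * Real.exp (-((a - b) * x)) + x * Real.exp (-((a + b) * x))) * Real.exp (-(2 * a * x)) ^ n := by
      intro n
      simp only [hfdef, hc₁def, hc₂def]
      rw [show -(((2 * (n:ℝ) + 1) * a - b) * x) = -((a - b) * x) + (n:ℝ) * (-(2 * a * x)) by ring,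
        show -(((2 * (n:ℝ) + 1) * a + b) * x) = -((a + b) * x) + (n:ℝ) * (-(2 * a * x)) by ring,
        Real.exp_add, Real.exp_add, Real.exp_nat_mul]
      ring
    show (Real.cosh (b * x) / Real.sinh (a * x)) * x = ∑' n : ℕ, f n x
    rw [tsum_congr hfx, tsum_mul_left, tsum_geometric_of_lt_one hr0 hr1]
    rw [Real.cosh_eq, Real.sinh_eq]
    have h1 : Real.exp (-((a - b) * x)) = Real.exp (b * x) * (Real.exp (a * x))⁻¹ := by
      rw [← Real.exp_neg, ← Real.exp_add]; congr 1; ring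
    have h2 : Real.exp (-((a + b) * x)) = (Real.exp (b * x))⁻¹ * (Real.exp (a * x))⁻¹ := by
      rw [← Real.exp_neg, ← Real.exp_neg, ← Real.exp_add]; congr 1; ring
    have h3 : Real.exp (-(2 * a * x)) = (Real.exp (a * x))⁻¹ * (Real.exp (a * x))⁻¹ := by
      rw [← Real.exp_neg, ← Real.exp_add]; congr 1; ring
    have h4 : Real.exp (-(b * x)) = (Real.exp (b * x))⁻¹ := Real.exp_neg _
    have h5 : Real.exp (-(a * x)) = (Real.exp (a * x))⁻¹ := Real.exp_neg _
    have hea : Real.exp (a * x) ≠ 0 := Real.exp_ne_zero _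
    have heb : Real.exp (b * x) ≠ 0 := Real.exp_ne_zero _
    have hgt : 1 < Real.exp (a * x) := by
      rw [show (1:ℝ) = Real.exp 0 by simp]
      exact Real.exp_lt_exp.mpr (by positivity)
    have hinv : (Real.exp (a * x))⁻¹ < 1 := by
      rw [← Real.exp_neg, Real.exp_lt_one_iff]
      nlinarith
    have hne1 : Real.exp (a * x) - (Real.exp (a * x))⁻¹ ≠ 0 := by
      have : (0:ℝ) < Real.exp (a * x) - (Real.exp (a * x))⁻¹ := by linarith
      linarith
    have hne2 : 1 - (Real.exp (a * x))⁻¹ * (Real.exp (a * x))⁻¹ ≠ 0 := by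
      have h := hr1
      rw [h3] at h
      intro hcon
      rw [sub_eq_zero] at hcon
      rw [← hcon] at h
      exact lt_irrefl _ h
    rw [h1, h2, h3, h4, h5, ← div_eq_mul_inv, div_mul_eq_mul_div,
      div_eq_div_iff (by positivity) (by
        intro hcon
        rw [sub_eq_zero] at hcon
        have h := hr1
        rw [h3, ← hcon] at h
        exact lt_irrefl _ h)]
    field_simp
  -- swap integral and sum
  rw [setIntegral_congr_fun measurableSet_Ioi hpt,
    ← integral_tsum_of_summable_integral_norm (fun n => hint n) hsumnorm,
    tsum_congr hival, Summable.tsum_add hsum1 hsum2,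
    tsum_congr hterm₁, tsum_congr hterm₂, tsum_mul_left, tsum_mul_left]
  -- now compute the sums via Parseval
  have hZ := parseval_sum x₀ hx0 hx1
  have hA : Summable (fun n : ℕ => 1 / (x₀ - ((n:ℤ):ℝ)) ^ 2) := by
    rw [← summable_nat_add_iff 1]
    refine (aux_sum (1 - x₀) (by linarith)).congr fun n => ?_
    congr 1
    push_cast
    ring
  have hB : Summable (fun n : ℕ => 1 / (x₀ - ((-((n:ℤ) + 1) : ℤ):ℝ)) ^ 2) := by
    refine (aux_sum (x₀ + 1) (by linarith)).congr fun n => ?_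
    congr 1
    push_cast
    ring
  have hsplit := tsum_of_nat_of_neg_add_one (f := fun k : ℤ => 1 / (x₀ - (k:ℝ)) ^ 2) hA hB
  have hZ' : (∑' n : ℕ, 1 / (x₀ - ((n:ℤ):ℝ)) ^ 2)
      + (∑' n : ℕ, 1 / (x₀ - ((-((n:ℤ) + 1) : ℤ):ℝ)) ^ 2) = π ^ 2 / Real.sin (π * x₀) ^ 2 :=
    hsplit.symm.trans hZ
  have eA : ∑' n : ℕ, 1 / (x₀ - ((n:ℤ):ℝ)) ^ 2
      = 1 / x₀ ^ 2 + ∑' n : ℕ, 1 / ((n:ℝ) + (1 - x₀)) ^ 2 := by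
    rw [Summable.tsum_eq_zero_add hA]
    congr 1
    · norm_num
    · refine tsum_congr fun n => ?_
      congr 1
      push_cast
      ring
  have eB : ∑' n : ℕ, 1 / (x₀ - ((-((n:ℤ) + 1) : ℤ):ℝ)) ^ 2
      = ∑' n : ℕ, 1 / (((n:ℝ) + 1) + x₀) ^ 2 := by
    refine tsum_congr fun n => ?_
    congr 1
    push_cast
    ring
  have eS₂ : ∑' n : ℕ, 1 / ((n:ℝ) + x₀) ^ 2
      = 1 / x₀ ^ 2 + ∑' n : ℕ, 1 / (((n:ℝ) + 1) + x₀) ^ 2 := by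
    rw [Summable.tsum_eq_zero_add (aux_sum x₀ hx0)]
    congr 1
    · norm_num
    · refine tsum_congr fun n => ?_
      congr 1
      push_cast
      ring
  have hsincos : Real.sin (π * x₀) = Real.cos (π * b / (2 * a)) := by
    have harg : π * x₀ = π / 2 + π * b / (2 * a) := by
      rw [hx₀def]
      field_simp
    rw [harg, Real.sin_add]
    simp
  have final : (∑' n : ℕ, 1 / ((n:ℝ) + (1 - x₀)) ^ 2) + (∑' n : ℕ, 1 / ((n:ℝ) + x₀) ^ 2)
      = π ^ 2 / Real.cos (π * b / (2 * a)) ^ 2 := by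
    rw [eA, eB] at hZ'
    rw [eS₂, ← hsincos, ← hZ']
    ring
  rw [← mul_add, final]
  ring
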